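/- Let G be a finite group, x ∈ S the simplex of R[G]. Then x commutes with c_x, i.e. x·c_x = c_x·x, where c_x = (1/|G_x|) Σ_{g∈G_x} g and G_x = ⟨Supp(x^{n_x})⟩. -/

import Mathlib

open Filter Topology

open scoped Classical in
lemma aux_mul_apply_filter {G : Type*} [Group G] [Fintype G]
    (x y : MonoidAlgebra ℝ G) (g : G) :
    (x * y).coeff g = ∑ p ∈ Finset.univ.filter (fun p : G × G => p.1 * p.2 = g),
      x.coeff p.1 * y.coeff p.2 :=
  MonoidAlgebra.coeff_mul_antidiag x y g (Finset.univ.filter (fun p : G × G => p.1 * p.2 = g)) (by simp)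

open scoped Classical in
lemma aux_le_mul_coeff {G : Type*} [Group G] [Fintype G]
    {x y : MonoidAlgebra ℝ G} (hx : ∀ g, 0 ≤ x.coeff g) (hy : ∀ g, 0 ≤ y.coeff g)
    (a b : G) : x.coeff a * y.coeff b ≤ (x * y).coeff (a * b) := by
  rw [aux_mul_apply_filter]
  exact Finset.single_le_sum (f := fun p : G × G => x.coeff p.1 * y.coeff p.2)
    (fun p _ => mul_nonneg (hx _) (hy _))
    (show ((a, b) : G × G) ∈ Finset.univ.filter (fun p : G × G => p.1 * p.2 = a * b) from
      Finset.mem_filter.2 ⟨Finset.mem_univ _, rfl⟩)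

open scoped Classical in
lemma aux_pow_nonneg {G : Type*} [Group G] [Fintype G]
    {x : MonoidAlgebra ℝ G} (hx : ∀ g, 0 ≤ x.coeff g) :
    ∀ k, ∀ g, 0 ≤ (x ^ k).coeff g := by
  intro k
  induction k with
  | zero =>
      intro g
      simp only [pow_zero, MonoidAlgebra.one_def, MonoidAlgebra.coeff_single]
      rw [Finsupp.single_apply]
      split <;> norm_num
  | succ m ih =>
      intro g
      rw [pow_succ, aux_mul_apply_filter]
      exact Finset.sum_nonneg fun p _ => mul_nonneg (ih _) (hx _)

open scoped Classical in
lemma aux_pow_of_list {G : Type*} [Group G] [Fintype G]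
    {x : MonoidAlgebra ℝ G} (hx : ∀ g, 0 ≤ x.coeff g) :
    ∀ l : List G, (∀ a ∈ l, x.coeff a ≠ 0) → (x ^ l.length).coeff l.prod ≠ 0 := by
  intro l
  induction l with
  | nil => intro _; simp [MonoidAlgebra.one_def, MonoidAlgebra.coeff_single, Finsupp.single_apply]
  | cons a l ih =>
      intro h
      have ha : 0 < x.coeff a := lt_of_le_of_ne (hx a) (Ne.symm (h a (by simp)))
      have hl : 0 < (x ^ l.length).coeff l.prod :=
        lt_of_le_of_ne (aux_pow_nonneg hx _ _)
          (Ne.symm (ih fun b hb => h b (by simp [hb])))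
      have := aux_le_mul_coeff (x := x) (y := x ^ l.length) hx
        (aux_pow_nonneg hx _) a l.prod
      have : 0 < (x * x ^ l.length).coeff (a * l.prod) :=
        lt_of_lt_of_le (mul_pos ha hl) this
      rw [List.prod_cons, List.length_cons, pow_succ']
      exact this.ne'

open scoped Classical in
lemma aux_list_of_pow {G : Type*} [Group G] [Fintype G]
    {x : MonoidAlgebra ℝ G} :
    ∀ k, ∀ g : G, (x ^ k).coeff g ≠ 0 →
      ∃ l : List G, l.length = k ∧ (∀ a ∈ l, x.coeff a ≠ 0) ∧ l.prod = g := by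
  intro k
  induction k with
  | zero =>
      intro g hg
      simp only [pow_zero, MonoidAlgebra.one_def, MonoidAlgebra.coeff_single] at hg
      rw [Finsupp.single_apply] at hg
      refine ⟨[], rfl, by simp, ?_⟩
      simp only [List.prod_nil]
      by_contra h
      rw [if_neg h] at hg
      exact hg rfl
  | succ m ih =>
      intro g hg
      rw [pow_succ', aux_mul_apply_filter] at hg
      obtain ⟨p, hp, hne⟩ := Finset.exists_ne_zero_of_sum_ne_zero hg
      simp only [Finset.mem_filter, Finset.mem_univ, true_and] at hp
      obtain ⟨l, hlen, hmem, hprod⟩ := ih p.2 (right_ne_zero_of_mul hne)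
      exact ⟨p.1 :: l, by simp [hlen], by
        intro a ha
        rcases List.mem_cons.1 ha with h | h
        · exact h ▸ left_ne_zero_of_mul hne
        · exact hmem a h, by simp [hprod, hp]⟩

open scoped Classical in
/-- For `x` in the simplex of `R[G]`, `x` commutes with
`c_x = (1/|G_x|) Σ_{g∈G_x} g`, where `G_x = ⟨Supp(x^{n_x})⟩`. -/
theorem stmt8 {G : Type*} [Group G] [Fintype G]
    (x : MonoidAlgebra ℝ G) (hx1 : ∑ g : G, x.coeff g = 1) (hx0 : ∀ g, 0 ≤ x.coeff g)
    (n : ℕ) (hn : IsLeast {k : ℕ | 0 < k ∧ (x ^ k).coeff (1 : G) ≠ 0} n)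
    (H : Subgroup G) (hH : H = Subgroup.closure ((x ^ n).coeff.support : Set G))
    (c : MonoidAlgebra ℝ G)
    (hc : c = (Nat.card H : ℝ)⁻¹ •
      ∑ g ∈ Finset.univ.filter (· ∈ H), MonoidAlgebra.single g (1 : ℝ)) :
    x * c = c * x := by
  obtain ⟨⟨hn0, hne⟩, -⟩ := hn
  -- a list of length n with product 1 and support entries
  obtain ⟨l, hlen, hlm, hlp⟩ := aux_list_of_pow n 1 hne
  -- membership lemmas
  have memH : ∀ g : G, (x ^ n).coeff g ≠ 0 → g ∈ H := by
    intro g hg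
    rw [hH]
    exact Subgroup.subset_closure (Finsupp.mem_support_iff.2 hg)
  have listH : ∀ m : List G, m.length = n → (∀ a ∈ m, x.coeff a ≠ 0) → m.prod ∈ H := by
    intro m hm hmem
    exact memH _ (hm ▸ aux_pow_of_list hx0 m hmem)
  have multH : ∀ j : ℕ, ∀ m : List G, m.length = j * n → (∀ a ∈ m, x.coeff a ≠ 0) →
      m.prod ∈ H := by
    intro j
    induction j with
    | zero =>
        intro m hm _
        obtain rfl : m = [] := List.length_eq_zero_iff.1 (by simpa using hm)
        simpa using one_mem H
    | succ i ih =>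
        intro m hm hmem
        have hn_le : n ≤ m.length := by rw [hm]; nlinarith
        rw [← List.prod_take_mul_prod_drop m n]
        refine mul_mem (listH _ (by simp [hn_le]) fun a ha => hmem a (List.take_subset _ _ ha)) ?_
        refine ih _ ?_ fun a ha => hmem a (List.drop_subset _ _ ha)
        rw [List.length_drop, hm]
        ring_nf
        omega
  -- split the unit list
  obtain ⟨s1, t, rfl⟩ : ∃ s1 t, l = s1 :: t := by
    cases l with
    | nil => simp at hlen; omega
    | cons a t => exact ⟨a, t, rfl⟩
  have tlen : t.length = n - 1 := by simp at hlen; omega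
  have ht : t.prod = s1⁻¹ := by
    rw [List.prod_cons] at hlp
    exact eq_inv_of_mul_eq_one_right hlp
  have htm : ∀ a ∈ t, x.coeff a ≠ 0 := fun a ha => hlm a (List.mem_cons_of_mem _ ha)
  have claim1 : ∀ s : G, x.coeff s ≠ 0 → s * s1⁻¹ ∈ H := by
    intro s hs
    have := listH (s :: t) (by simp [tlen]; omega) (by
      intro a ha
      rcases List.mem_cons.1 ha with h | h
      · exact h ▸ hs
      · exact htm a h)
    simpa [List.prod_cons, ht] using this
  -- every support element normalizes H
  have snorm : ∀ s : G, x.coeff s ≠ 0 → ∀ h : G, h ∈ H ↔ s * h * s⁻¹ ∈ H := by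
    intro s hs
    have conj : ∀ h ∈ H, s * h * s⁻¹ ∈ H := by
      intro h hmem
      rw [hH] at hmem
      induction hmem using Subgroup.closure_induction with
      | mem g hg =>
          obtain ⟨m, mlen, mmem, mprod⟩ :=
            aux_list_of_pow n g (Finsupp.mem_support_iff.1 hg)
          have h2 : (s :: (m ++ t)).prod ∈ H := by
            refine multH 2 _ ?_ ?_
            · simp [mlen, tlen]; omega
            · intro a ha
              rcases List.mem_cons.1 ha with h | h
              · exact h ▸ hs
              · rcases List.mem_append.1 h with h | h
                · exact mmem a h
                · exact htm a h
          have heq : s * g * s⁻¹ = (s :: (m ++ t)).prod * (s * s1⁻¹)⁻¹ := by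
            rw [List.prod_cons, List.prod_append, mprod, ht]
            group
          rw [heq]
          exact mul_mem h2 (inv_mem (claim1 s hs))
      | one => simpa using one_mem H
      | mul g1 g2 _ _ p1 p2 =>
          have : s * (g1 * g2) * s⁻¹ = (s * g1 * s⁻¹) * (s * g2 * s⁻¹) := by group
          rw [this]; exact mul_mem p1 p2
      | inv g _ p =>
          have : s * g⁻¹ * s⁻¹ = (s * g * s⁻¹)⁻¹ := by group
          rw [this]; exact inv_mem p
    have : s ∈ Subgroup.normalizer (H : Set G) := Subgroup.mem_normalizer_fintype (S := (H : Set G)) conj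
    exact Subgroup.mem_normalizer_iff.1 this
  -- algebraic conclusion
  subst hc
  rw [mul_smul_comm, smul_mul_assoc]
  congr 1
  have hxdec : x = ∑ a ∈ x.coeff.support, MonoidAlgebra.single a (x.coeff a) := by
    conv_lhs => rw [← MonoidAlgebra.sum_coeff_single x]
    rfl
  rw [hxdec, Finset.sum_mul, Finset.mul_sum]
  refine Finset.sum_congr rfl ?_
  intro s hs
  have hs' : x.coeff s ≠ 0 := Finsupp.mem_support_iff.1 hs
  rw [Finset.mul_sum, Finset.sum_mul]
  simp only [MonoidAlgebra.single_mul_single, one_mul, mul_one]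
  refine Finset.sum_nbij' (fun g => s * g * s⁻¹) (fun g => s⁻¹ * g * s) ?_ ?_ ?_ ?_ ?_
  · intro g hg
    simp only [Finset.mem_filter, Finset.mem_univ, true_and] at hg ⊢
    exact (snorm s hs' g).1 hg
  · intro g hg
    simp only [Finset.mem_filter, Finset.mem_univ, true_and] at hg ⊢
    have := (snorm s hs' (s⁻¹ * g * s)).2
    apply this
    convert hg using 1
    group
  · intro g _; group
  · intro g _; group
  · intro g _
    congr 1
    group
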